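/- Let n ≥ 4, let T be a maximal non-crossing set of diagonals of the n-gon, and let d ∈ T. Then there is exactly one diagonal d' ≠ d such that (T \ {d}) ∪ {d'} is again a maximal non-crossing set of diagonals. -/

import Mathlib

/-- `e` is a diagonal of the `m`-gon with vertex set `ZMod m`:
a 2-element set `{a, b}` with `b ∉ {a, a + 1, a - 1}`. -/
def IsDiag (m : ℕ) (e : Finset (ZMod m)) : Prop :=
  ∃ a b : ZMod m, e = {a, b} ∧ b ≠ a ∧ b ≠ a + 1 ∧ b ≠ a - 1

/-- `x` lies in the open cyclic arc `{a+1, a+2, …, b-1}` from `a` to `b`. -/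
def InArc (m : ℕ) (a b x : ZMod m) : Prop :=
  0 < (x - a).val ∧ (x - a).val < (b - a).val

/-- The diagonals `{a,b}` and `{c,d}` cross: the four points are pairwise
distinct and exactly one of `c, d` lies in the open arc from `a` to `b`. -/
def CrossPts (m : ℕ) (a b c d : ZMod m) : Prop :=
  ([a, b, c, d] : List (ZMod m)).Pairwise (· ≠ ·) ∧
    Xor' (InArc m a b c) (InArc m a b d)

/-- Crossing of diagonals, as unordered pairs. -/
def Cross (m : ℕ) (e f : Finset (ZMod m)) : Prop :=
  ∃ a b c d : ZMod m, e = {a, b} ∧ f = {c, d} ∧ CrossPts m a b c d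

/-- `A` is a set of pairwise non-crossing diagonals of the `m`-gon. -/
def NonCrossingSet (m : ℕ) (A : Set (Finset (ZMod m))) : Prop :=
  (∀ e ∈ A, IsDiag m e) ∧ ∀ e ∈ A, ∀ f ∈ A, ¬ Cross m e f

/-- A maximal non-crossing set of diagonals (a triangulation). -/
def MaxNonCrossing (n : ℕ) (T : Set (Finset (ZMod n))) : Prop :=
  NonCrossingSet n T ∧
    ∀ B : Set (Finset (ZMod n)), NonCrossingSet n B → T ⊆ B → B = T

namespace FlipAux

/-- `k` lies in the open cyclic arc from `i` to `j` (coordinates in `[0,n)`). -/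
def Btw (i j k : ℕ) : Prop := (i < j ∧ i < k ∧ k < j) ∨ (j < i ∧ (i < k ∨ k < j))

variable {n : ℕ} [NeZero n]

theorem val_sub_cases (u v : ZMod n) :
    ((u - v).val = u.val - v.val ∧ v.val ≤ u.val) ∨
      ((u - v).val = u.val + n - v.val ∧ u.val < v.val) := by
  have h : ((u - v) + v).val = ((u - v).val + v.val) % n := ZMod.val_add _ _
  rw [sub_add_cancel] at h
  have h1 := ZMod.val_lt (u - v)
  have h2 := ZMod.val_lt v
  have h3 := ZMod.val_lt u
  rcases Nat.lt_or_ge ((u - v).val + v.val) n with hlt | hge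
  · rw [Nat.mod_eq_of_lt hlt] at h; omega
  · rw [Nat.mod_eq_sub_mod hge, Nat.mod_eq_of_lt (by omega)] at h; omega

theorem t_inj (a : ZMod n) {x y : ZMod n} (h : (x - a).val = (y - a).val) : x = y := by
  have := ZMod.val_injective n h
  have h2 : x - a + a = y - a + a := by rw [this]
  simpa [sub_add_cancel] using h2

theorem t_eq_iff (a x y : ZMod n) : x = y ↔ (x - a).val = (y - a).val :=
  ⟨fun h => by rw [h], t_inj a⟩

theorem inArc_iff (a u v x : ZMod n) :
    InArc n u v x ↔ Btw ((u - a).val) ((v - a).val) ((x - a).val) := by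
  have h1 := val_sub_cases (x - a) (u - a)
  have h2 := val_sub_cases (v - a) (u - a)
  have e1 : (x - a) - (u - a) = x - u := by ring
  have e2 : (v - a) - (u - a) = v - u := by ring
  rw [e1] at h1; rw [e2] at h2
  have b1 := ZMod.val_lt (x - a)
  have b2 := ZMod.val_lt (v - a)
  have b3 := ZMod.val_lt (u - a)
  unfold InArc Btw
  omega

theorem pairwise4 {α : Type*} (u v c c' : α) :
    ([u, v, c, c'] : List α).Pairwise (· ≠ ·) ↔
      (u ≠ v ∧ u ≠ c ∧ u ≠ c' ∧ v ≠ c ∧ v ≠ c' ∧ c ≠ c') := by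
  simp [List.pairwise_cons, and_assoc]

theorem crossPts_iff (a u v c c' : ZMod n) :
    CrossPts n u v c c' ↔
      ((u - a).val ≠ (v - a).val ∧ (u - a).val ≠ (c - a).val ∧ (u - a).val ≠ (c' - a).val ∧
        (v - a).val ≠ (c - a).val ∧ (v - a).val ≠ (c' - a).val ∧ (c - a).val ≠ (c' - a).val) ∧
       Xor' (Btw ((u - a).val) ((v - a).val) ((c - a).val))
         (Btw ((u - a).val) ((v - a).val) ((c' - a).val)) := by
  unfold CrossPts
  rw [inArc_iff a, inArc_iff a, pairwise4]
  simp only [ne_eq, t_eq_iff a u v, t_eq_iff a u c, t_eq_iff a u c', t_eq_iff a v c,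
    t_eq_iff a v c', t_eq_iff a c c']


theorem t_bound (a x : ZMod n) : (x - a).val < n := ZMod.val_lt _

theorem pair_eq {α : Type*} [DecidableEq α] {u v c d : α}
    (h : ({u, v} : Finset α) = {c, d}) (huv : u ≠ v) :
    (u = c ∧ v = d) ∨ (u = d ∧ v = c) := by
  have hu : u ∈ ({c, d} : Finset α) := by rw [← h]; simp
  have hv : v ∈ ({c, d} : Finset α) := by rw [← h]; simp
  have hc : c ∈ ({u, v} : Finset α) := by rw [h]; simp
  have hdm : d ∈ ({u, v} : Finset α) := by rw [h]; simp
  simp only [Finset.mem_insert, Finset.mem_singleton] at hu hv hc hdm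
  rcases hu with hu | hu <;> rcases hv with hv | hv <;> try tauto

theorem cross_symm {e f : Finset (ZMod n)} (h : Cross n e f) : Cross n f e := by
  obtain ⟨a, b, c, d, he, hf, hcp⟩ := h
  refine ⟨c, d, a, b, hf, he, ?_⟩
  rw [crossPts_iff a] at hcp ⊢
  have b1 := t_bound a a; have b2 := t_bound a b; have b3 := t_bound a c
  have b4 := t_bound a d
  simp only [sub_self, ZMod.val_zero] at hcp ⊢
  unfold Btw Xor' Xor at hcp ⊢
  omega

theorem no_self_cross (e : Finset (ZMod n)) : ¬ Cross n e e := by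
  rintro ⟨a, b, c, d, he, hf, hpw, hxor⟩
  rw [pairwise4] at hpw
  have : c ∈ ({c, d} : Finset (ZMod n)) := by simp
  rw [← hf, he] at this
  simp only [Finset.mem_insert, Finset.mem_singleton] at this
  tauto

theorem side_not_cross (hn : 4 ≤ n) (u : ZMod n) (f : Finset (ZMod n)) :
    ¬ Cross n {u, u + 1} f := by
  haveI : Fact (1 < n) := ⟨by omega⟩
  rintro ⟨a, b, c, c', he, hf, hcp⟩
  rw [crossPts_iff u] at hcp
  obtain ⟨⟨hd1, hd⟩, hxor⟩ := hcp
  have hab : a ≠ b := fun h => hd1 (by rw [h])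
  have huu : u ≠ u + 1 := left_ne_add.mpr one_ne_zero
  have h1 : (u + 1 - u : ZMod n) = 1 := by ring
  have hcases := pair_eq he huu
  have b3 := t_bound u c; have b4 := t_bound u c'
  rcases hcases with ⟨h2, h3⟩ | ⟨h2, h3⟩ <;> subst h2 <;> subst h3 <;>
    rw [h1, ZMod.val_one, sub_self, ZMod.val_zero] at hd1 hd hxor <;>
    unfold Btw Xor' Xor at hxor <;> omega


/-- `{u,v}` is an edge of the triangulation `T`: a diagonal of `T` or a side. -/
def EdgeO (n : ℕ) (T : Set (Finset (ZMod n))) (u v : ZMod n) : Prop :=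
  {u, v} ∈ T ∨ v = u + 1 ∨ u = v + 1

theorem edge_not_cross (hn : 4 ≤ n) {T : Set (Finset (ZMod n))} (hT : NonCrossingSet n T)
    {u v : ZMod n} (h : EdgeO n T u v) {e : Finset (ZMod n)} (he : e ∈ T) :
    ¬ Cross n {u, v} e := by
  rcases h with h | h | h
  · exact hT.2 _ h e he
  · subst h; exact side_not_cross hn u e
  · subst h; rw [Finset.pair_comm]; exact side_not_cross hn v e

theorem edge_not_crossPts (hn : 4 ≤ n) {T : Set (Finset (ZMod n))} (hT : NonCrossingSet n T)
    {u v : ZMod n} (h : EdgeO n T u v) {e : Finset (ZMod n)} (he : e ∈ T)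
    {c c' : ZMod n} (hf : e = {c, c'}) :
    ¬ CrossPts n u v c c' ∧ ¬ CrossPts n v u c c' :=
  ⟨fun hc => edge_not_cross hn hT h he ⟨u, v, c, c', rfl, hf, hc⟩,
   fun hc => edge_not_cross hn hT h he ⟨v, u, c, c', Finset.pair_comm u v, hf, hc⟩⟩

theorem mem_of_compat {T : Set (Finset (ZMod n))} (hT : MaxNonCrossing n T)
    {g : Finset (ZMod n)} (hg : IsDiag n g) (h : ∀ e ∈ T, ¬ Cross n g e) : g ∈ T := by
  have hB : NonCrossingSet n (T ∪ {g}) := by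
    constructor
    · rintro e (he | he)
      · exact hT.1.1 e he
      · rw [Set.mem_singleton_iff] at he; subst he; exact hg
    · rintro e (he | he) f (hf | hf)
      · exact hT.1.2 e he f hf
      · rw [Set.mem_singleton_iff] at hf; subst hf
        exact fun hc => h e he (cross_symm hc)
      · rw [Set.mem_singleton_iff] at he; subst he; exact h f hf
      · rw [Set.mem_singleton_iff] at he hf; subst he; subst hf
        exact no_self_cross _
  have := hT.2 _ hB Set.subset_union_left
  rw [← this]
  exact Set.mem_union_right T rfl


theorem neg_one_val (hn : 4 ≤ n) : (-1 : ZMod n).val = n - 1 := by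
  haveI : Fact (1 < n) := ⟨by omega⟩
  have h := val_sub_cases (0 : ZMod n) (1 : ZMod n)
  rw [ZMod.val_zero, ZMod.val_one, zero_sub] at h
  omega

theorem t_zero_iff (a x : ZMod n) : x = a ↔ (x - a).val = 0 := by
  rw [t_eq_iff a x a, sub_self, ZMod.val_zero]

theorem t_one_iff (hn : 4 ≤ n) (a x : ZMod n) : x = a + 1 ↔ (x - a).val = 1 := by
  haveI : Fact (1 < n) := ⟨by omega⟩
  rw [t_eq_iff a x (a + 1), add_sub_cancel_left, ZMod.val_one]

theorem t_neg_one_iff (hn : 4 ≤ n) (a x : ZMod n) : x = a - 1 ↔ (x - a).val = n - 1 := by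
  rw [t_eq_iff a x (a - 1), sub_sub_cancel_left]
  rw [neg_one_val hn]

theorem btw_lt {i j k : ℕ} (h : i < j) : Btw i j k ↔ i < k ∧ k < j := by
  unfold Btw; omega

theorem btw_gt {i j k : ℕ} (h : j < i) : Btw i j k ↔ (i < k ∨ k < j) := by
  unfold Btw; omega


theorem key_arith (n k tb tc tc' : ℕ)
    (hbn : tb < n) (hcn : tc < n) (hcn' : tc' < n) (hk0 : 0 < k) (hkb : k < tb)
    (Hd : ¬ ((0 ≠ tb ∧ 0 ≠ tc ∧ 0 ≠ tc' ∧ tb ≠ tc ∧ tb ≠ tc' ∧ tc ≠ tc') ∧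
      Xor' (Btw 0 tb tc) (Btw 0 tb tc')))
    (Hpb : ¬ ((k ≠ tb ∧ k ≠ tc ∧ k ≠ tc' ∧ tb ≠ tc ∧ tb ≠ tc' ∧ tc ≠ tc') ∧
      Xor' (Btw k tb tc) (Btw k tb tc')))
    (hx : ((0 ≠ k ∧ 0 ≠ tc ∧ 0 ≠ tc' ∧ k ≠ tc ∧ k ≠ tc' ∧ tc ≠ tc') ∧
        Xor' (Btw 0 k tc) (Btw 0 k tc')) ∨
      ((k ≠ 0 ∧ k ≠ tc ∧ k ≠ tc' ∧ 0 ≠ tc ∧ 0 ≠ tc' ∧ tc ≠ tc') ∧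
        Xor' (Btw k 0 tc) (Btw k 0 tc'))) :
    (tc' = tb ∧ 0 < tc ∧ tc < k) ∨ (tc = tb ∧ 0 < tc' ∧ tc' < k) := by
  have hx' : (0 < tc ∧ tc < k ∧ k < tc') ∨ (0 < tc' ∧ tc' < k ∧ k < tc) := by
    clear Hd Hpb
    unfold Btw Xor' Xor at hx
    omega
  clear hx
  rcases hx' with ⟨h1, h2, h3⟩ | ⟨h1, h2, h3⟩
  · rcases Nat.lt_trichotomy tc' tb with h4 | h4 | h4
    · exfalso; apply Hpb; clear Hpb Hd
      unfold Btw Xor' Xor; omega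
    · left; omega
    · exfalso; apply Hd; clear Hpb Hd
      unfold Btw Xor' Xor; omega
  · rcases Nat.lt_trichotomy tc tb with h4 | h4 | h4
    · exfalso; apply Hpb; clear Hpb Hd
      unfold Btw Xor' Xor; omega
    · right; omega
    · exfalso; apply Hd; clear Hpb Hd
      unfold Btw Xor' Xor; omega

theorem apex (hn : 4 ≤ n) {T : Set (Finset (ZMod n))} (hT : MaxNonCrossing n T)
    {a b : ZMod n} (hd : ({a, b} : Finset (ZMod n)) ∈ T)
    (h1 : b ≠ a) (h2 : b ≠ a + 1) (h3 : b ≠ a - 1) :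
    ∃ p, InArc n a b p ∧ EdgeO n T a p ∧ EdgeO n T p b := by
  haveI : Fact (1 < n) := ⟨by omega⟩
  classical
  have hb1' : (b - a).val ≠ 0 := fun h => h1 ((t_zero_iff a b).mpr h)
  have hb2' : (b - a).val ≠ 1 := fun h => h2 ((t_one_iff hn a b).mpr h)
  have hb3' : (b - a).val ≠ n - 1 := fun h => h3 ((t_neg_one_iff hn a b).mpr h)
  have hbn := t_bound a b
  have H : ∃ k, ∃ x : ZMod n, (x - a).val = k ∧ InArc n a b x ∧ EdgeO n T x b := by
    have hv := val_sub_cases (b - a) (1 : ZMod n)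
    rw [ZMod.val_one] at hv
    have e1 : b - 1 - a = (b - a) - 1 := by ring
    have hval : (b - 1 - a).val = (b - a).val - 1 := by rw [e1]; omega
    exact ⟨(b - a).val - 1, b - 1, hval, ⟨by omega, by omega⟩,
      Or.inr (Or.inl (by ring))⟩
  obtain ⟨p, hpk, hpin, hpb⟩ := Nat.find_spec H
  have hmin : ∀ x : ZMod n, (x - a).val < (p - a).val → InArc n a b x →
      ¬ EdgeO n T x b := fun x hx hin hedge =>
    Nat.find_min H (hpk ▸ hx) ⟨x, rfl, hin, hedge⟩
  clear hpk
  refine ⟨p, hpin, ?_, hpb⟩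
  have hkpos : 0 < (p - a).val := hpin.1
  have hklt : (p - a).val < (b - a).val := hpin.2
  by_cases hk1 : (p - a).val = 1
  · exact Or.inr (Or.inl ((t_one_iff hn a p).mpr hk1))
  · left
    apply mem_of_compat hT
    · exact ⟨a, p, rfl, fun h => by rw [(t_zero_iff a p).mp h] at hkpos; simp at hkpos,
        fun h => hk1 ((t_one_iff hn a p).mp h),
        fun h => by have := (t_neg_one_iff hn a p).mp h; omega⟩
    · intro e he hc
      obtain ⟨a', b', c, c', hrep, hfrep, hcp⟩ := hc
      have hap : a ≠ p := fun h => by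
        rw [(t_zero_iff a p).mp h.symm] at hkpos; simp at hkpos
      have hcases := pair_eq hrep hap
      obtain ⟨Hd1, Hd2⟩ := edge_not_crossPts hn hT.1 (Or.inl hd) he hfrep
      obtain ⟨Hp1, Hp2⟩ := edge_not_crossPts hn hT.1 hpb he hfrep
      rw [crossPts_iff a] at Hd1 Hd2 Hp1 Hp2
      have bc := t_bound a c
      have bc' := t_bound a c'
      have bp := t_bound a p
      have key : ((c' - a).val = (b - a).val ∧ 0 < (c - a).val ∧ (c - a).val < (p - a).val) ∨
          ((c - a).val = (b - a).val ∧ 0 < (c' - a).val ∧ (c' - a).val < (p - a).val) := by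
        simp only [sub_self, ZMod.val_zero] at Hd1 Hp1
        refine key_arith n ((p - a).val) ((b - a).val) ((c - a).val) ((c' - a).val)
          hbn bc bc' hkpos hklt Hd1 Hp1 ?_
        rcases hcases with ⟨hA, hB⟩ | ⟨hA, hB⟩ <;> subst hA <;> subst hB <;>
          rw [crossPts_iff a] at hcp <;>
          simp only [sub_self, ZMod.val_zero] at hcp
        · exact Or.inl hcp
        · exact Or.inr hcp
      rcases key with ⟨hcb, hcr⟩ | ⟨hcb, hcr⟩
      · have hce : c' = b := t_inj a (by rw [hcb])
        subst hce
        refine hmin c (by omega) ?_ (Or.inl (by rw [← hfrep]; exact he))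
        rw [inArc_iff a]
        simp only [sub_self, ZMod.val_zero]
        unfold Btw
        omega
      · have hce : c = b := t_inj a (by rw [hcb])
        subst hce
        refine hmin c' (by omega) ?_ (Or.inl (by rw [Finset.pair_comm, ← hfrep]; exact he))
        rw [inArc_iff a]
        simp only [sub_self, ZMod.val_zero]
        unfold Btw
        omega


theorem quad_i_arith (n tp tb tq tc tc' : ℕ)
    (h1 : 0 < tp) (h2 : tp < tb) (h3 : tb < tq) (h4 : tq < n) (h5 : tc < n) (h6 : tc' < n)
    (Hap : ¬ ((0 ≠ tp ∧ 0 ≠ tc ∧ 0 ≠ tc' ∧ tp ≠ tc ∧ tp ≠ tc' ∧ tc ≠ tc') ∧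
      Xor' (Btw 0 tp tc) (Btw 0 tp tc')))
    (Hpb : ¬ ((tp ≠ tb ∧ tp ≠ tc ∧ tp ≠ tc' ∧ tb ≠ tc ∧ tb ≠ tc' ∧ tc ≠ tc') ∧
      Xor' (Btw tp tb tc) (Btw tp tb tc')))
    (Hbq : ¬ ((tb ≠ tq ∧ tb ≠ tc ∧ tb ≠ tc' ∧ tq ≠ tc ∧ tq ≠ tc' ∧ tc ≠ tc') ∧
      Xor' (Btw tb tq tc) (Btw tb tq tc')))
    (Hqa : ¬ ((tq ≠ 0 ∧ tq ≠ tc ∧ tq ≠ tc' ∧ 0 ≠ tc ∧ 0 ≠ tc' ∧ tc ≠ tc') ∧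
      Xor' (Btw tq 0 tc) (Btw tq 0 tc')))
    (Hab : ¬ ((0 ≠ tb ∧ 0 ≠ tc ∧ 0 ≠ tc' ∧ tb ≠ tc ∧ tb ≠ tc' ∧ tc ≠ tc') ∧
      Xor' (Btw 0 tb tc) (Btw 0 tb tc')))
    (hne1 : ¬ (tc = 0 ∧ tc' = tb)) (hne2 : ¬ (tc = tb ∧ tc' = 0))
    (hx : ((tp ≠ tq ∧ tp ≠ tc ∧ tp ≠ tc' ∧ tq ≠ tc ∧ tq ≠ tc' ∧ tc ≠ tc') ∧
        Xor' (Btw tp tq tc) (Btw tp tq tc')) ∨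
      ((tq ≠ tp ∧ tq ≠ tc ∧ tq ≠ tc' ∧ tp ≠ tc ∧ tp ≠ tc' ∧ tc ≠ tc') ∧
        Xor' (Btw tq tp tc) (Btw tq tp tc'))) : False := by
  have hx' : (tc ≠ tc') ∧ ((tp < tc ∧ tc < tq ∧ (tc' < tp ∨ tq < tc')) ∨
      (tp < tc' ∧ tc' < tq ∧ (tc < tp ∨ tq < tc))) := by
    clear Hap Hpb Hbq Hqa Hab hne1 hne2
    unfold Btw Xor' Xor at hx; omega
  clear hx
  obtain ⟨hcc, hx'⟩ := hx'
  rcases hx' with ⟨k1, k2, k3⟩ | ⟨k1, k2, k3⟩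
  · rcases Nat.lt_trichotomy tc tb with hA | hA | hA
    · rcases k3 with k3 | k3
      · apply Hpb; clear Hap Hpb Hbq Hqa Hab hne1 hne2; unfold Btw Xor' Xor; omega
      · apply Hqa; clear Hap Hpb Hbq Hqa Hab hne1 hne2; unfold Btw Xor' Xor; omega
    · have hz : tc' ≠ 0 := fun h => hne2 ⟨hA, h⟩
      rcases k3 with k3 | k3
      · apply Hap; clear Hap Hpb Hbq Hqa Hab hne1 hne2; unfold Btw Xor' Xor; omega
      · apply Hqa; clear Hap Hpb Hbq Hqa Hab hne1 hne2; unfold Btw Xor' Xor; omega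
    · rcases k3 with k3 | k3
      · apply Hbq; clear Hap Hpb Hbq Hqa Hab hne1 hne2; unfold Btw Xor' Xor; omega
      · apply Hqa; clear Hap Hpb Hbq Hqa Hab hne1 hne2; unfold Btw Xor' Xor; omega
  · rcases Nat.lt_trichotomy tc' tb with hA | hA | hA
    · rcases k3 with k3 | k3
      · apply Hpb; clear Hap Hpb Hbq Hqa Hab hne1 hne2; unfold Btw Xor' Xor; omega
      · apply Hqa; clear Hap Hpb Hbq Hqa Hab hne1 hne2; unfold Btw Xor' Xor; omega
    · have hz : tc ≠ 0 := fun h => hne1 ⟨h, hA⟩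
      rcases k3 with k3 | k3
      · apply Hap; clear Hap Hpb Hbq Hqa Hab hne1 hne2; unfold Btw Xor' Xor; omega
      · apply Hqa; clear Hap Hpb Hbq Hqa Hab hne1 hne2; unfold Btw Xor' Xor; omega
    · rcases k3 with k3 | k3
      · apply Hbq; clear Hap Hpb Hbq Hqa Hab hne1 hne2; unfold Btw Xor' Xor; omega
      · apply Hqa; clear Hap Hpb Hbq Hqa Hab hne1 hne2; unfold Btw Xor' Xor; omega

theorem quad_ii_arith (n tp tb tq tx ty : ℕ)
    (h1 : 0 < tp) (h2 : tp < tb) (h3 : tb < tq) (h4 : tq < n) (h5 : tx < n) (h6 : ty < n)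
    (Hap : ¬ ((0 ≠ tp ∧ 0 ≠ tx ∧ 0 ≠ ty ∧ tp ≠ tx ∧ tp ≠ ty ∧ tx ≠ ty) ∧
      Xor' (Btw 0 tp tx) (Btw 0 tp ty)))
    (Hpb : ¬ ((tp ≠ tb ∧ tp ≠ tx ∧ tp ≠ ty ∧ tb ≠ tx ∧ tb ≠ ty ∧ tx ≠ ty) ∧
      Xor' (Btw tp tb tx) (Btw tp tb ty)))
    (Hbq : ¬ ((tb ≠ tq ∧ tb ≠ tx ∧ tb ≠ ty ∧ tq ≠ tx ∧ tq ≠ ty ∧ tx ≠ ty) ∧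
      Xor' (Btw tb tq tx) (Btw tb tq ty)))
    (Hqa : ¬ ((tq ≠ 0 ∧ tq ≠ tx ∧ tq ≠ ty ∧ 0 ≠ tx ∧ 0 ≠ ty ∧ tx ≠ ty) ∧
      Xor' (Btw tq 0 tx) (Btw tq 0 ty)))
    (hcross :
      ((tx ≠ ty ∧ tx ≠ 0 ∧ tx ≠ tb ∧ ty ≠ 0 ∧ ty ≠ tb ∧ 0 ≠ tb) ∧
        Xor' (Btw tx ty 0) (Btw tx ty tb)) ∨
      ((tx ≠ ty ∧ tx ≠ tb ∧ tx ≠ 0 ∧ ty ≠ tb ∧ ty ≠ 0 ∧ tb ≠ 0) ∧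
        Xor' (Btw tx ty tb) (Btw tx ty 0)) ∨
      ((ty ≠ tx ∧ ty ≠ 0 ∧ ty ≠ tb ∧ tx ≠ 0 ∧ tx ≠ tb ∧ 0 ≠ tb) ∧
        Xor' (Btw ty tx 0) (Btw ty tx tb)) ∨
      ((ty ≠ tx ∧ ty ≠ tb ∧ ty ≠ 0 ∧ tx ≠ tb ∧ tx ≠ 0 ∧ tb ≠ 0) ∧
        Xor' (Btw ty tx tb) (Btw ty tx 0))) :
    (tx = tp ∧ ty = tq) ∨ (tx = tq ∧ ty = tp) := by
  have hsep : (0 < tx ∧ tx < tb ∧ tb < ty) ∨ (0 < ty ∧ ty < tb ∧ tb < tx) := by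
    clear Hap Hpb Hbq Hqa
    unfold Btw Xor' Xor at hcross; omega
  clear hcross
  rcases hsep with ⟨k1, k2, k3⟩ | ⟨k1, k2, k3⟩
  · have hxp : tx = tp := by
      rcases Nat.lt_trichotomy tx tp with hA | hA | hA
      · exfalso; apply Hap; clear Hap Hpb Hbq Hqa; unfold Btw Xor' Xor; omega
      · exact hA
      · exfalso; apply Hpb; clear Hap Hpb Hbq Hqa; unfold Btw Xor' Xor; omega
    have hyq : ty = tq := by
      rcases Nat.lt_trichotomy ty tq with hA | hA | hA
      · exfalso; apply Hbq; clear Hap Hpb Hbq Hqa; unfold Btw Xor' Xor; omega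
      · exact hA
      · exfalso; apply Hqa; clear Hap Hpb Hbq Hqa; unfold Btw Xor' Xor; omega
    exact Or.inl ⟨hxp, hyq⟩
  · have hyp : ty = tp := by
      rcases Nat.lt_trichotomy ty tp with hA | hA | hA
      · exfalso; apply Hap; clear Hap Hpb Hbq Hqa; unfold Btw Xor' Xor; omega
      · exact hA
      · exfalso; apply Hpb; clear Hap Hpb Hbq Hqa; unfold Btw Xor' Xor; omega
    have hxq : tx = tq := by
      rcases Nat.lt_trichotomy tx tq with hA | hA | hA
      · exfalso; apply Hbq; clear Hap Hpb Hbq Hqa; unfold Btw Xor' Xor; omega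
      · exact hA
      · exfalso; apply Hqa; clear Hap Hpb Hbq Hqa; unfold Btw Xor' Xor; omega
    exact Or.inr ⟨hxq, hyp⟩


theorem quad_i (hn : 4 ≤ n) {T : Set (Finset (ZMod n))} (hT : NonCrossingSet n T)
    {a b p q : ZMod n} (hd : ({a, b} : Finset (ZMod n)) ∈ T)
    (hpin : InArc n a b p) (hqin : InArc n b a q)
    (hap : EdgeO n T a p) (hpb : EdgeO n T p b) (hbq : EdgeO n T b q) (hqa : EdgeO n T q a)
    {e : Finset (ZMod n)} (he : e ∈ T) (hne : e ≠ ({a, b} : Finset (ZMod n))) :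
    ¬ Cross n {p, q} e := by
  intro hc
  obtain ⟨a', b', c, c', hrep, hfrep, hcp⟩ := hc
  have hco : 0 < (p - a).val ∧ (p - a).val < (b - a).val ∧ (b - a).val < (q - a).val ∧
      (q - a).val < n := by
    rw [inArc_iff a] at hpin hqin
    simp only [sub_self, ZMod.val_zero] at hpin hqin
    have := t_bound a q
    unfold Btw at hpin hqin
    omega
  have hpq : p ≠ q := fun h => absurd ((t_eq_iff a p q).mp h) (by omega)
  obtain ⟨Hap, -⟩ := edge_not_crossPts hn hT hap he hfrep
  obtain ⟨Hpb, -⟩ := edge_not_crossPts hn hT hpb he hfrep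
  obtain ⟨Hbq, -⟩ := edge_not_crossPts hn hT hbq he hfrep
  obtain ⟨Hqa, -⟩ := edge_not_crossPts hn hT hqa he hfrep
  obtain ⟨Hab, -⟩ := edge_not_crossPts hn hT (Or.inl hd) he hfrep
  rw [crossPts_iff a] at Hap Hpb Hbq Hqa Hab
  simp only [sub_self, ZMod.val_zero] at Hap Hpb Hbq Hqa Hab
  have hne1 : ¬ ((c - a).val = 0 ∧ (c' - a).val = (b - a).val) := fun ⟨u1, u2⟩ =>
    hne (by rw [hfrep, (t_zero_iff a c).mpr u1, t_inj a u2])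
  have hne2 : ¬ ((c - a).val = (b - a).val ∧ (c' - a).val = 0) := fun ⟨u1, u2⟩ =>
    hne (by rw [hfrep, (t_zero_iff a c').mpr u2, t_inj a u1, Finset.pair_comm])
  have hb5 := t_bound a c
  have hb6 := t_bound a c'
  refine quad_i_arith n ((p - a).val) ((b - a).val) ((q - a).val) ((c - a).val)
    ((c' - a).val) hco.1 hco.2.1 hco.2.2.1 hco.2.2.2 hb5 hb6 Hap Hpb Hbq Hqa Hab hne1 hne2 ?_
  rcases pair_eq hrep hpq with ⟨hA, hB⟩ | ⟨hA, hB⟩ <;> subst hA <;> subst hB <;>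
    rw [crossPts_iff a] at hcp
  · exact Or.inl hcp
  · exact Or.inr hcp

theorem quad_ii (hn : 4 ≤ n) {T : Set (Finset (ZMod n))}
    {a b p q : ZMod n}
    (hpin : InArc n a b p) (hqin : InArc n b a q)
    (hap : EdgeO n T a p) (hpb : EdgeO n T p b) (hbq : EdgeO n T b q) (hqa : EdgeO n T q a)
    {x y : ZMod n} (hxy : x ≠ y)
    (hcompat : ∀ g ∈ T, g ≠ ({a, b} : Finset (ZMod n)) → ¬ Cross n g {x, y})
    (hcross : Cross n ({x, y} : Finset (ZMod n)) {a, b}) :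
    ({x, y} : Finset (ZMod n)) = {p, q} := by
  have hco : 0 < (p - a).val ∧ (p - a).val < (b - a).val ∧ (b - a).val < (q - a).val ∧
      (q - a).val < n := by
    rw [inArc_iff a] at hpin hqin
    simp only [sub_self, ZMod.val_zero] at hpin hqin
    have := t_bound a q
    unfold Btw at hpin hqin
    omega
  have hab : a ≠ b := fun h => absurd ((t_eq_iff a a b).mp h)
    (by simp only [sub_self, ZMod.val_zero]; omega)
  -- the four edges do not cross {x, y}
  have key : ∀ u v : ZMod n, EdgeO n T u v → ({u, v} : Finset (ZMod n)) ≠ {a, b} →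
      ¬ CrossPts n u v x y := by
    intro u v hedge hnee hcp
    rcases hedge with h | h | h
    · exact hcompat _ h hnee ⟨u, v, x, y, rfl, rfl, hcp⟩
    · exact side_not_cross hn u {x, y}
        ⟨u, u + 1, x, y, rfl, rfl, by rw [h] at hcp; exact hcp⟩
    · exact side_not_cross hn v {x, y}
        ⟨v + 1, v, x, y, Finset.pair_comm v (v + 1), rfl, by rw [h] at hcp; exact hcp⟩
  have t0 : (a - a).val = 0 := by simp
  have tne : ∀ {u v : ZMod n}, (u - a).val ≠ (v - a).val → u ≠ v :=
    fun h hh => h ((t_eq_iff a _ _).mp hh)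
  obtain ⟨c1, c2, c3, c4⟩ := hco
  have hAP : ¬ CrossPts n a p x y := key a p hap (by
    intro h
    rcases pair_eq h (tne (by rw [t0]; omega)) with ⟨h1, h2⟩ | ⟨h1, h2⟩
    · exact (tne (by omega)) h2
    · exact (tne (by rw [t0]; omega)) h1)
  have hPB : ¬ CrossPts n p b x y := key p b hpb (by
    intro h
    rcases pair_eq h (tne (by omega)) with ⟨h1, h2⟩ | ⟨h1, h2⟩
    · exact (tne (by rw [t0]; omega)) h1
    · exact (tne (by omega)) h1)
  have hBQ : ¬ CrossPts n b q x y := key b q hbq (by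
    intro h
    rcases pair_eq h (tne (by omega)) with ⟨h1, h2⟩ | ⟨h1, h2⟩
    · exact (tne (by rw [t0]; omega)) h1
    · exact (tne (by rw [t0]; omega)) h2)
  have hQA : ¬ CrossPts n q a x y := key q a hqa (by
    intro h
    rcases pair_eq h (tne (by rw [t0]; omega)) with ⟨h1, h2⟩ | ⟨h1, h2⟩
    · exact (tne (by rw [t0]; omega)) h1
    · exact (tne (by omega)) h1)
  rw [crossPts_iff a] at hAP hPB hBQ hQA
  simp only [sub_self, ZMod.val_zero] at hAP hPB hBQ hQA
  have hb5 := t_bound a x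
  have hb6 := t_bound a y
  have hres := quad_ii_arith n ((p - a).val) ((b - a).val) ((q - a).val) ((x - a).val)
    ((y - a).val) c1 c2 c3 c4 hb5 hb6 hAP hPB hBQ hQA ?_
  · rcases hres with ⟨e1, e2⟩ | ⟨e1, e2⟩
    · rw [t_inj a e1, t_inj a e2]
    · rw [t_inj a e1, t_inj a e2, Finset.pair_comm]
  · obtain ⟨x', y', cc, dd, hr1, hr2, hcp⟩ := hcross
    rcases pair_eq hr1 hxy with ⟨h1, h2⟩ | ⟨h1, h2⟩ <;> subst h1 <;> subst h2 <;>
      rcases pair_eq hr2 hab with ⟨h1, h2⟩ | ⟨h1, h2⟩ <;> subst h1 <;> subst h2 <;>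
      rw [crossPts_iff a] at hcp <;>
      simp only [sub_self, ZMod.val_zero] at hcp
    · exact Or.inl hcp
    · exact Or.inr (Or.inl hcp)
    · exact Or.inr (Or.inr (Or.inl hcp))
    · exact Or.inr (Or.inr (Or.inr hcp))

end FlipAux

/-- For `n ≥ 4`, a maximal non-crossing set `T` of diagonals of
the `n`-gon and `d ∈ T`, there is exactly one diagonal `d' ≠ d` such that
`(T \ {d}) ∪ {d'}` is again a maximal non-crossing set (the edge flip). -/
theorem unique_flip (n : ℕ) (hn : 4 ≤ n)
    (T : Set (Finset (ZMod n))) (hT : MaxNonCrossing n T)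
    (d : Finset (ZMod n)) (hd : d ∈ T) :
    ∃! d' : Finset (ZMod n),
      IsDiag n d' ∧ d' ≠ d ∧ MaxNonCrossing n ((T \ {d}) ∪ {d'}) := by
  haveI : NeZero n := ⟨by omega⟩
  haveI : Fact (1 < n) := ⟨by omega⟩
  obtain ⟨a, b, hdrep, hb1, hb2, hb3⟩ := hT.1.1 d hd
  subst hdrep
  obtain ⟨p, hpin, hap, hpb⟩ := FlipAux.apex hn hT hd hb1 hb2 hb3
  have hdba : ({b, a} : Finset (ZMod n)) ∈ T := by rw [Finset.pair_comm]; exact hd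
  have ha2 : a ≠ b + 1 := fun h => hb3 (by rw [h]; ring)
  have ha3 : a ≠ b - 1 := fun h => hb2 (by rw [h]; ring)
  obtain ⟨q, hqin, hbq, hqa⟩ := FlipAux.apex hn hT hdba hb1.symm ha2 ha3
  have t0 : (a - a).val = 0 := by simp
  have hco : 0 < (p - a).val ∧ (p - a).val < (b - a).val ∧ (b - a).val < (q - a).val ∧
      (q - a).val < n := by
    rw [FlipAux.inArc_iff a] at hpin hqin
    simp only [sub_self, ZMod.val_zero] at hpin hqin
    have := FlipAux.t_bound a q
    unfold FlipAux.Btw at hpin hqin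
    omega
  obtain ⟨c1, c2, c3, c4⟩ := hco

  have tne : ∀ {u v : ZMod n}, (u - a).val ≠ (v - a).val → u ≠ v :=
    fun h hh => h ((FlipAux.t_eq_iff a _ _).mp hh)
  have hvqp := FlipAux.val_sub_cases (q - a) (p - a)
  have e1 : (q - a) - (p - a) = q - p := by ring
  rw [e1] at hvqp
  have hqp1 : q ≠ p + 1 := fun h => by
    have h2 : q - p = 1 := by rw [h]; ring
    have h3 := congrArg ZMod.val h2
    rw [ZMod.val_one] at h3; omega
  have hqp3 : q ≠ p - 1 := fun h => by
    have h2 : q - p = -1 := by rw [h]; ring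
    have h3 := congrArg ZMod.val h2
    rw [FlipAux.neg_one_val hn] at h3; omega
  have hdiagpq : IsDiag n ({p, q} : Finset (ZMod n)) :=
    ⟨p, q, rfl, tne (by omega), hqp1, hqp3⟩
  have hpq : p ≠ q := tne (by omega)
  have hpqne : ({p, q} : Finset (ZMod n)) ≠ {a, b} := by
    intro h
    rcases FlipAux.pair_eq h hpq with ⟨h1, h2⟩ | ⟨h1, h2⟩
    · exact (tne (by rw [t0]; omega) : p ≠ a) h1
    · exact (tne (by omega) : p ≠ b) h1
  have hddp : Cross n ({a, b} : Finset (ZMod n)) {p, q} := by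
    refine ⟨a, b, p, q, rfl, rfl, ?_⟩
    rw [FlipAux.crossPts_iff a]
    simp only [sub_self, ZMod.val_zero]
    constructor
    · omega
    · unfold Xor' Xor FlipAux.Btw; omega
  refine ⟨{p, q}, ⟨hdiagpq, fun h => hpqne h, ?_⟩, ?_⟩
  · constructor
    · constructor
      · rintro e he
        rcases he with ⟨heT, -⟩ | he
        · exact hT.1.1 e heT
        · rw [Set.mem_singleton_iff] at he; exact he ▸ hdiagpq
      · rintro e he f hf
        rcases he with ⟨heT, hene⟩ | he <;> rcases hf with ⟨hfT, hfne⟩ | hf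
        · exact hT.1.2 e heT f hfT
        · rw [Set.mem_singleton_iff] at hf; subst hf
          intro hc
          exact FlipAux.quad_i hn hT.1 hd hpin hqin hap hpb hbq hqa heT
            (fun h => hene (by rw [h]; exact rfl)) (FlipAux.cross_symm hc)
        · rw [Set.mem_singleton_iff] at he; subst he
          exact FlipAux.quad_i hn hT.1 hd hpin hqin hap hpb hbq hqa hfT
            (fun h => hfne (by rw [h]; exact rfl))
        · rw [Set.mem_singleton_iff] at he hf; subst he; subst hf
          exact FlipAux.no_self_cross _
    · intro B hB hsub
      refine Set.Subset.antisymm ?_ hsub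
      intro f hf
      have hfdiag := hB.1 f hf
      have hpqB : ({p, q} : Finset (ZMod n)) ∈ B := hsub (Or.inr rfl)
      by_cases hfp : f = ({p, q} : Finset (ZMod n))
      · exact Or.inr hfp
      · have hcompat : ∀ g ∈ T, g ≠ ({a, b} : Finset (ZMod n)) → ¬ Cross n g f :=
          fun g hg hgne => hB.2 g (hsub (Or.inl ⟨hg, fun hm => hgne hm⟩)) f hf
        have hnotd : ¬ Cross n f ({a, b} : Finset (ZMod n)) := by
          intro hcr
          obtain ⟨x, y, hfxy, hy1, hy2, hy3⟩ := hfdiag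
          have heq := FlipAux.quad_ii hn hpin hqin hap hpb hbq hqa hy1.symm
            (fun g hg hgne => by rw [← hfxy]; exact hcompat g hg hgne)
            (by rw [← hfxy]; exact hcr)
          exact hfp (hfxy.trans heq)
        have hfT : f ∈ T := FlipAux.mem_of_compat hT hfdiag (fun g hg => by
          by_cases hgd : g = ({a, b} : Finset (ZMod n))
          · rw [hgd]; exact hnotd
          · exact fun hc => hcompat g hg hgd (FlipAux.cross_symm hc))
        have hfned : f ≠ ({a, b} : Finset (ZMod n)) := by
          intro h
          exact hB.2 f hf ({p, q} : Finset (ZMod n)) hpqB (by rw [h]; exact hddp)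
        exact Or.inl ⟨hfT, fun hm => hfned hm⟩
  · rintro d'' ⟨hdiag'', hne'', hmax''⟩
    have hd''mem : d'' ∈ (T \ {({a, b} : Finset (ZMod n))}) ∪ {d''} := Or.inr rfl
    have hcompat'' : ∀ g ∈ T, g ≠ ({a, b} : Finset (ZMod n)) → ¬ Cross n g d'' :=
      fun g hg hgne => hmax''.1.2 g (Or.inl ⟨hg, fun hm => hgne hm⟩) d'' hd''mem
    have hd''notT : d'' ∉ T := by
      intro hmem
      have hsub2 : (T \ {({a, b} : Finset (ZMod n))}) ∪ {d''} ⊆ T := by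
        rintro g (⟨hg, -⟩ | hg)
        · exact hg
        · rw [Set.mem_singleton_iff] at hg; exact hg ▸ hmem
      have heq := hmax''.2 T hT.1 hsub2
      have hmem2 : ({a, b} : Finset (ZMod n)) ∈
          (T \ {({a, b} : Finset (ZMod n))}) ∪ {d''} := by rw [← heq]; exact hd
      rcases hmem2 with ⟨-, hno⟩ | hsing
      · exact hno rfl
      · exact hne'' (Set.mem_singleton_iff.mp hsing).symm
    have hcrossd : Cross n d'' ({a, b} : Finset (ZMod n)) := by
      by_contra hnc
      apply hd''notT
      apply FlipAux.mem_of_compat hT hdiag''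
      intro g hg
      by_cases hgd : g = ({a, b} : Finset (ZMod n))
      · rw [hgd]; exact hnc
      · exact fun hc => hcompat'' g hg hgd (FlipAux.cross_symm hc)
    obtain ⟨x, y, hfxy, hy1, -, -⟩ := hdiag''
    have heq := FlipAux.quad_ii hn hpin hqin hap hpb hbq hqa hy1.symm
      (fun g hg hgne => by rw [← hfxy]; exact hcompat'' g hg hgne)
      (by rw [← hfxy]; exact hcrossd)
    exact hfxy.trans heq
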